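/- arXiv:1810.06773 — 3 statements merged into one kernel-verified Lean document; each statement's English description precedes it below -/
import Mathlib

section
/- Let f : α → ℝ be a fitness function and let S be a finite multiset of μ individuals. If T is a multiset of μ individuals obtained from S ∪ O (where O is any finite multiset of offspring) by taking the m smallest fitness values of S ∪ O together with any μ − m other elements of S ∪ O, then the sum of the m smallest fitness values in T is at most the sum of the m smallest fitness values in S. -/
/-- Sum of the `m` smallest fitness values of a multiset of individuals. -/
noncomputable def mSmallestSum {α : Type*} (f : α → ℝ) (m : ℕ) (M : Multiset α) : ℝ :=
  (((M.map f).sort (· ≤ ·)).take m).sum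

private lemma take_cons_sum_le (y : ℝ) :
    ∀ (t : List ℝ), (y :: t).Pairwise (· ≤ ·) → ∀ k, k ≤ t.length →
      ((y :: t).take k).sum ≤ (t.take k).sum := by
  intro t
  induction t generalizing y with
  | nil =>
    intro _ k hk
    have : k = 0 := Nat.le_zero.mp (by simpa using hk)
    subst this; simp
  | cons b t' ih =>
    intro hs k hk
    cases k with
    | zero => simp
    | succ j =>
      have hyb : y ≤ b := (List.pairwise_cons.mp hs).1 b (by simp)
      have hbt : (b :: t').Pairwise (· ≤ ·) := (List.pairwise_cons.mp hs).2
      have := ih b hbt j (Nat.lt_succ_iff.mp (Nat.lt_of_succ_le hk))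
      simp only [List.take_succ_cons, List.sum_cons]
      linarith

private lemma orderedInsert_take_sum_le (x : ℝ) :
    ∀ (l : List ℝ), l.Pairwise (· ≤ ·) → ∀ m, m ≤ l.length →
      ((List.orderedInsert (· ≤ ·) x l).take m).sum ≤ (l.take m).sum := by
  intro l
  induction l with
  | nil =>
    intro _ m hm
    have : m = 0 := Nat.le_zero.mp (by simpa using hm)
    subst this; simp
  | cons a t ih =>
    intro hs m hm
    by_cases hxa : x ≤ a
    · simp only [List.orderedInsert, if_pos hxa]
      cases m with
      | zero => simp
      | succ k =>
        have h1 : ((a :: t).take k).sum ≤ (t.take k).sum :=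
          take_cons_sum_le a t hs k (Nat.lt_succ_iff.mp (Nat.lt_of_succ_le hm))
        simp only [List.take_succ_cons, List.sum_cons]
        linarith
    · simp only [List.orderedInsert, if_neg hxa]
      cases m with
      | zero => simp
      | succ k =>
        have h1 := ih (List.pairwise_cons.mp hs).2 k
          (Nat.lt_succ_iff.mp (Nat.lt_of_succ_le hm))
        simp only [List.take_succ_cons, List.sum_cons]
        linarith

private lemma sort_cons_eq_orderedInsert (x : ℝ) (M : Multiset ℝ) :
    (x ::ₘ M).sort (· ≤ ·) = List.orderedInsert (· ≤ ·) x (M.sort (· ≤ ·)) := by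
  have h1 : ((x ::ₘ M).sort (· ≤ ·)).Perm (x :: M.sort (· ≤ ·)) :=
    Multiset.coe_eq_coe.mp (by rw [← Multiset.cons_coe, Multiset.sort_eq, Multiset.sort_eq])
  have h2 : (x :: M.sort (· ≤ ·)).Perm (List.orderedInsert (· ≤ ·) x (M.sort (· ≤ ·))) :=
    (List.perm_orderedInsert _ x _).symm
  exact List.Perm.eq_of_pairwise' (Multiset.pairwise_sort _ _)
    ((Multiset.pairwise_sort M (· ≤ ·)).orderedInsert x _) (h1.trans h2)

private lemma mSmallest_add_le {α : Type*} (f : α → ℝ) (m : ℕ) (S : Multiset α) :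
    ∀ (O : Multiset α), m ≤ Multiset.card S →
      mSmallestSum f m (S + O) ≤ mSmallestSum f m S := by
  intro O
  induction O using Multiset.induction with
  | empty => intro _; simp [mSmallestSum]
  | cons a O ih =>
    intro hm
    have h1 : S + a ::ₘ O = a ::ₘ (S + O) := by
      rw [Multiset.add_cons]
    calc mSmallestSum f m (S + a ::ₘ O) ≤ mSmallestSum f m (S + O) := by
          rw [h1]
          unfold mSmallestSum
          rw [Multiset.map_cons, sort_cons_eq_orderedInsert]
          apply orderedInsert_take_sum_le _ _ (Multiset.pairwise_sort _ _)
          simp only [Multiset.length_sort, Multiset.card_map, Multiset.card_add]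
          exact le_trans hm (Nat.le_add_right _ _)
      _ ≤ mSmallestSum f m S := ih hm

/-- m-elitist selection from parents plus offspring does not increase the sum of the
`m` smallest fitness values. -/
theorem mElitist_selection_nonincreasing {α : Type*} (f : α → ℝ) (μ m : ℕ)
    (S O T : Multiset α) (hS : Multiset.card S = μ) (hm : m ≤ μ)
    (hTsub : T ≤ S + O) (hTcard : Multiset.card T = μ)
    (hElite : (((T.map f).sort (· ≤ ·)).take m)
              = ((((S + O).map f).sort (· ≤ ·)).take m)) :
    mSmallestSum f m T ≤ mSmallestSum f m S := by
  have h1 : mSmallestSum f m T = mSmallestSum f m (S + O) := by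
    unfold mSmallestSum; rw [hElite]
  rw [h1]
  exact mSmallest_add_le f m S O (hS ▸ hm)
end

section
/- Let μ, m be natural numbers with 1 ≤ m ≤ μ. Suppose P : ℕ → Multiset α is a sequence of populations each of cardinality μ, f : α → ℝ a fitness function, and suppose for each k there exist: (a) a multiset P' of cardinality μ with a bijection to P k under which each element's fitness is ≤ its counterpart's fitness in P k (the SGD step with back-off), and (b) an offspring multiset O, such that P (k+1) consists of the m elements of P' ∪ O with the smallest fitness values together with μ − m other elements of P' ∪ O. Then the m-elitist average fitness J_m(P k) := (1/m) · (sum of the m smallest values of f on P k) satisfies J_m(P (k+1)) ≤ J_m(P k) for all k. -/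
private lemma sum_take_le_of_sublist : ∀ {l' l : List ℝ}, List.Sublist l' l →
    ∀ m : ℕ, l.Pairwise (· ≤ ·) → m ≤ l'.length → (l.take m).sum ≤ (l'.take m).sum := by
  intro l' l h
  induction h with
  | slnil => intro m _ hm; simp
  | @cons l' l a h ih =>
    intro m hs hm
    match m with
    | 0 => simp
    | Nat.succ n =>
      have hlt : n < l'.length := hm
      have h1 : (l.take n).sum ≤ (l'.take n).sum :=
        ih n hs.of_cons (le_of_lt hlt)
      have ha : a ≤ l'[n] := by
        have hmem : l'[n] ∈ l' := List.getElem_mem hlt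
        exact List.rel_of_pairwise_cons hs (h.subset hmem)
      calc ((a :: l).take (n+1)).sum = a + (l.take n).sum := by
            simp [List.take_succ_cons]
        _ ≤ l'[n] + (l'.take n).sum := add_le_add ha h1
        _ = (l'.take n).sum + l'[n] := by ring
        _ = (l'.take (n+1)).sum := (List.sum_take_succ l' n hlt).symm
  | @cons_cons l' l a h ih =>
    intro m hs hm
    match m with
    | 0 => simp
    | Nat.succ n =>
      have hn : n ≤ l'.length := by simpa using Nat.succ_le_succ_iff.mp hm
      simp only [List.take_succ_cons, List.sum_cons]
      exact add_le_add_right (ih n hs.of_cons hn) a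

/-- sorted list of a sub-multiset is a sublist of the sorted list. -/
private lemma sort_sublist_of_le {u s : Multiset ℝ} (h : u ≤ s) :
    List.Sublist (u.sort (· ≤ ·)) (s.sort (· ≤ ·)) := by
  apply List.sublist_of_subperm_of_pairwise _ (Multiset.pairwise_sort _ _) (Multiset.pairwise_sort _ _)
  rw [← Multiset.coe_le, Multiset.sort_eq, Multiset.sort_eq]
  exact h

/-- Lemma A: enlarging a multiset can only decrease the sum of the m smallest. -/
private lemma takeSum_le_of_le {u s : Multiset ℝ} (h : u ≤ s) {m : ℕ} (hm : m ≤ Multiset.card u) :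
    ((s.sort (· ≤ ·)).take m).sum ≤ ((u.sort (· ≤ ·)).take m).sum := by
  apply sum_take_le_of_sublist (sort_sublist_of_le h) m (Multiset.pairwise_sort _ _)
  rwa [Multiset.length_sort]

/-- extraction lemma for Rel. -/
private lemma rel_extract {α β : Type*} [DecidableEq β] {r : α → β → Prop}
    {s : Multiset α} {t : Multiset β}
    (h : Multiset.Rel r s t) : ∀ u ≤ t, ∃ u' ≤ s, Multiset.Rel r u' u := by
  induction h with
  | zero => intro u hu; rw [Multiset.le_zero] at hu; exact ⟨0, le_refl _, hu ▸ Multiset.Rel.zero⟩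
  | @cons a b s t hab hst ih =>
    intro u hu
    by_cases hb : b ∈ u
    · have h1 : u.erase b ≤ t := by
        have := Multiset.erase_le_erase b hu
        rwa [Multiset.erase_cons_head] at this
      obtain ⟨u', hu', hrel⟩ := ih _ h1
      refine ⟨a ::ₘ u', Multiset.cons_le_cons a hu', ?_⟩
      have : u = b ::ₘ u.erase b := (Multiset.cons_erase hb).symm
      rw [this]
      exact Multiset.Rel.cons hab hrel
    · have h1 : u ≤ t := by
        rw [Multiset.le_iff_count] at hu ⊢
        intro x
        rcases eq_or_ne x b with rfl | hxb
        · simp [Multiset.count_eq_zero_of_notMem hb]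
        · have := hu x
          rwa [Multiset.count_cons_of_ne hxb] at this
      obtain ⟨u', hu', hrel⟩ := ih _ h1
      exact ⟨u', le_trans hu' (Multiset.le_cons_self _ _), hrel⟩

/-- Lemma B: a fitness-dominating bijection decreases the sum of the m smallest. -/
private lemma takeSum_le_of_rel {s t : Multiset ℝ} (h : Multiset.Rel (· ≤ ·) s t) (m : ℕ) :
    ((s.sort (· ≤ ·)).take m).sum ≤ ((t.sort (· ≤ ·)).take m).sum := by
  have hcard : Multiset.card s = Multiset.card t := Multiset.card_eq_card_of_rel h
  rcases le_or_gt m (Multiset.card t) with hm | hm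
  · -- m ≤ card t : use extraction
    set l := (t.sort (· ≤ ·)).take m with hl
    have hsub : List.Sublist l (t.sort (· ≤ ·)) := List.take_sublist _ _
    have hu : (l : Multiset ℝ) ≤ t := by
      conv_rhs => rw [← Multiset.sort_eq t (· ≤ ·)]
      exact Multiset.coe_le.mpr hsub.subperm
    obtain ⟨u', hu', hrel⟩ := rel_extract h _ hu
    have hcardl : Multiset.card (l : Multiset ℝ) = m := by
      simp [hl, Multiset.length_sort, hm]
    have hcardu' : Multiset.card u' = m := by
      rw [Multiset.card_eq_card_of_rel hrel, hcardl]
    have hsum : u'.sum ≤ (l : Multiset ℝ).sum := Multiset.sum_le_sum_of_rel_le hrel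
    have h1 : ((s.sort (· ≤ ·)).take m).sum ≤ ((u'.sort (· ≤ ·)).take m).sum :=
      takeSum_le_of_le hu' (le_of_eq hcardu'.symm)
    have h2 : ((u'.sort (· ≤ ·)).take m).sum = u'.sum := by
      have hlen : (u'.sort (· ≤ ·)).length ≤ m := by
        rw [Multiset.length_sort, hcardu']
      rw [List.take_of_length_le hlen, ← Multiset.sum_coe, Multiset.sort_eq]
    have h3 : ((t.sort (· ≤ ·)).take m).sum = (l : Multiset ℝ).sum := by
      rw [Multiset.sum_coe]
    rw [h3]
    rw [h2] at h1
    exact le_trans h1 hsum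
  · -- m > card t : both takes are the whole lists
    have hs : (s.sort (· ≤ ·)).take m = s.sort (· ≤ ·) :=
      List.take_of_length_le (by rw [Multiset.length_sort, hcard]; omega)
    have ht : (t.sort (· ≤ ·)).take m = t.sort (· ≤ ·) :=
      List.take_of_length_le (by rw [Multiset.length_sort]; omega)
    rw [hs, ht]
    have h1 : (s.sort (· ≤ ·)).sum = s.sum := by
      rw [← Multiset.sum_coe, Multiset.sort_eq]
    have h2 : (t.sort (· ≤ ·)).sum = t.sum := by
      rw [← Multiset.sum_coe, Multiset.sort_eq]
    rw [h1, h2]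
    exact Multiset.sum_le_sum_of_rel_le h

/-- m-elitist average fitness: the average of the `m` smallest fitness values of a
population. -/
noncomputable def mElitistAvg {α : Type*} (f : α → ℝ) (m : ℕ) (M : Multiset α) : ℝ :=
  (1 / (m : ℝ)) * (((M.map f).sort (· ≤ ·)).take m).sum

/-- Theorem 1 of the ESGD paper: with a back-off SGD step (each individual's fitness
does not increase, expressed by a fitness-dominating bijection `Multiset.Rel`) and an
m-elitist evolution step (the `m` best of parents-plus-offspring are always kept and
the remaining `μ - m` slots are filled from the same pool), the m-elitist average
fitness is non-increasing across generations. -/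
theorem esgd_mElitist_nonincreasing {α : Type*} [DecidableEq α] (f : α → ℝ) (μ m : ℕ)
    (hm1 : 1 ≤ m) (hmμ : m ≤ μ)
    (P : ℕ → Multiset α) (hcard : ∀ k, Multiset.card (P k) = μ)
    (hstep : ∀ k, ∃ P' O : Multiset α,
      Multiset.card P' = μ ∧
      Multiset.Rel (fun a b => f a ≤ f b) P' (P k) ∧
      ∃ E R : Multiset α,
        P (k + 1) = E + R ∧
        E ≤ P' + O ∧
        Multiset.card E = m ∧
        (E.map f).sort (· ≤ ·) = (((P' + O).map f).sort (· ≤ ·)).take m ∧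
        R ≤ (P' + O) - E ∧
        Multiset.card R = μ - m) :
    ∀ k, mElitistAvg f m (P (k + 1)) ≤ mElitistAvg f m (P k) := by
  intro k
  obtain ⟨P', O, hP'card, hrel, E, R, hPk1, hE, hEcard, hEsort, hR, hRcard⟩ := hstep k
  unfold mElitistAvg
  apply mul_le_mul_of_nonneg_left _ (by positivity)
  have h1 : ((((P (k+1)).map f).sort (· ≤ ·)).take m).sum
      ≤ (((E.map f).sort (· ≤ ·)).take m).sum := by
    apply takeSum_le_of_le
    · rw [hPk1]; exact Multiset.map_le_map (Multiset.le_add_right E R)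
    · simp [hEcard]
  have h2 : (((E.map f).sort (· ≤ ·)).take m).sum
      = ((((P' + O).map f).sort (· ≤ ·)).take m).sum := by
    rw [hEsort, List.take_take, min_self]
  have h3 : ((((P' + O).map f).sort (· ≤ ·)).take m).sum
      ≤ (((P'.map f).sort (· ≤ ·)).take m).sum := by
    apply takeSum_le_of_le
    · exact Multiset.map_le_map (Multiset.le_add_right P' O)
    · simp [hP'card]; omega
  have h4 : (((P'.map f).sort (· ≤ ·)).take m).sum
      ≤ ((((P k).map f).sort (· ≤ ·)).take m).sum := by
    apply takeSum_le_of_rel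
    rw [Multiset.rel_map]
    exact hrel
  linarith
end

section
/- Let M and M' be multisets of real numbers of the same cardinality μ, and suppose there is a bijection between them under which each element of M' is less than or equal to the corresponding element of M (pointwise domination). Then for every m ≤ μ, the sum of the m smallest elements of M' is at most the sum of the m smallest elements of M. -/
open Multiset List

private lemma sort_coe_sorted (l : List ℝ) (h : l.Pairwise (· ≤ ·)) :
    Multiset.sort (l : Multiset ℝ) (· ≤ ·) = l :=
  List.Perm.eq_of_pairwise'
    (Multiset.pairwise_sort _ _) h
    (Multiset.coe_eq_coe.mp (Multiset.sort_eq (l : Multiset ℝ) (· ≤ ·)))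

private lemma sorted_forall₂_of_rel : ∀ (n : ℕ) (M M' : Multiset ℝ),
    Multiset.card M = n → Multiset.Rel (· ≤ ·) M' M →
    List.Forall₂ (· ≤ ·) (M'.sort (· ≤ ·)) (M.sort (· ≤ ·)) := by
  intro n
  induction n with
  | zero =>
    intro M M' hc hrel
    have hM : M = 0 := Multiset.card_eq_zero.mp hc
    subst hM
    have hM' : M' = 0 := Multiset.rel_zero_right.mp hrel
    subst hM'
    simp [Multiset.sort_zero]
  | succ n ih =>
    intro M M' hc hrel
    have hc' : Multiset.card M' = n + 1 := (Multiset.card_eq_card_of_rel hrel).trans hc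
    -- decompose sorted lists
    obtain ⟨b, l, hbl⟩ : ∃ b l, M.sort (· ≤ ·) = b :: l := by
      rcases h : M.sort (· ≤ ·) with _ | ⟨b, l⟩
      · exfalso
        have := Multiset.length_sort (α := ℝ) (· ≤ ·) (s := M)
        rw [h] at this; simp [hc] at this
      · exact ⟨b, l, rfl⟩
    obtain ⟨a, l', hal⟩ : ∃ a l', M'.sort (· ≤ ·) = a :: l' := by
      rcases h : M'.sort (· ≤ ·) with _ | ⟨a, l'⟩
      · exfalso
        have := Multiset.length_sort (α := ℝ) (· ≤ ·) (s := M')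
        rw [h] at this; simp [hc'] at this
      · exact ⟨a, l', rfl⟩
    have hMeq : M = b ::ₘ (l : Multiset ℝ) := by
      have := Multiset.sort_eq M (· ≤ ·)
      rw [hbl] at this; exact this.symm
    have hM'eq : M' = a ::ₘ (l' : Multiset ℝ) := by
      have := Multiset.sort_eq M' (· ≤ ·)
      rw [hal] at this; exact this.symm
    have hsortM : (M.sort (· ≤ ·)).Pairwise (· ≤ ·) := Multiset.pairwise_sort _ _
    have hsortM' : (M'.sort (· ≤ ·)).Pairwise (· ≤ ·) := Multiset.pairwise_sort _ _
    rw [hbl] at hsortM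
    rw [hal] at hsortM'
    have hbmin : ∀ x ∈ M, b ≤ x := by
      intro x hx
      rw [hMeq, Multiset.mem_cons] at hx
      rcases hx with h | h
      · exact h ▸ le_refl b
      · exact (List.pairwise_cons.mp hsortM).1 x (by exact_mod_cast h)
    have hamin : ∀ x ∈ M', a ≤ x := by
      intro x hx
      rw [hM'eq, Multiset.mem_cons] at hx
      rcases hx with h | h
      · exact h ▸ le_refl a
      · exact (List.pairwise_cons.mp hsortM').1 x (by exact_mod_cast h)
    -- a ≤ b
    have hab : a ≤ b := by
      rw [hMeq] at hrel
      obtain ⟨a₁, t₁, ha₁b, _, hM'a⟩ := Multiset.rel_cons_right.mp hrel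
      exact le_trans (hamin a₁ (hM'a ▸ Multiset.mem_cons_self _ _)) ha₁b
    -- Rel on tails
    have htail : Multiset.Rel (· ≤ ·) (l' : Multiset ℝ) (l : Multiset ℝ) := by
      rw [hMeq, hM'eq] at hrel
      obtain ⟨c, t, hac, hrel', heq⟩ := Multiset.rel_cons_left.mp hrel
      rcases Multiset.cons_eq_cons.mp heq with ⟨rfl, rfl⟩ | ⟨_, s, hls, hts⟩
      · exact hrel'
      · rw [hts] at hrel'
        obtain ⟨a₁, t₁, ha₁b, hrel'', hl'⟩ := Multiset.rel_cons_right.mp hrel'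
        rw [hls, hl']
        have hbc : b ≤ c := hbmin c (by rw [hMeq, hls]; exact Multiset.mem_cons_of_mem (Multiset.mem_cons_self _ _))
        exact Multiset.rel_cons_left.mpr ⟨c, s, le_trans ha₁b hbc, hrel'', rfl⟩
    have hcardl : Multiset.card (l : Multiset ℝ) = n := by
      have := hc; rw [hMeq] at this; simpa using this
    have hih := ih (l : Multiset ℝ) (l' : Multiset ℝ) hcardl htail
    rw [sort_coe_sorted l (List.pairwise_cons.mp hsortM).2,
        sort_coe_sorted l' (List.pairwise_cons.mp hsortM').2] at hih
    rw [hbl, hal]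
    exact List.Forall₂.cons hab hih

/-- Pointwise domination (via a bijection between two multisets of reals of the same
cardinality) implies domination of the sum of the `m` smallest elements. -/
theorem mSmallest_sum_mono_of_rel (μ : ℕ) (M M' : Multiset ℝ)
    (hM : Multiset.card M = μ) (hM' : Multiset.card M' = μ)
    (hrel : Multiset.Rel (fun a b => a ≤ b) M' M) :
    ∀ m ≤ μ, (((M'.sort (· ≤ ·)).take m).sum) ≤ (((M.sort (· ≤ ·)).take m).sum) := by
  intro m _
  have h := sorted_forall₂_of_rel (Multiset.card M) M M' rfl hrel
  exact List.Forall₂.sum_le_sum (List.forall₂_take m h)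
end
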